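/- Let E be a real inner product space, f : E → ℝ convex and differentiable with L-Lipschitz gradient (L > 0), with nonempty minimizer set Ω and f* = min f. Let γ ∈ (0,1], C₂ ∈ (0, (2−γ)/L], C₁ ≥ C₂, and suppose the iterates x_{k+1} = x_k − α_k ∇f(x_k) are generated with step sizes satisfying α_k ∈ [C₂, C₁] and the sufficient decrease condition f(x_k − α_k ∇f(x_k)) ≤ f(x_k) − (γ α_k / 2) ‖∇f(x_k)‖² for all k. Then for every x̄ ∈ Ω and every k ≥ 0: ‖x_{k+1} − x̄‖² ≤ ‖x_0 − x̄‖² + (2C₁/γ)(f(x_0) − f(x_{k+1})) + 2C₂ ∑_{T=0}^{k} (f* − f(x_T)) ≤ ‖x_0 − x̄‖² + (2C₁/γ)(f(x_0) − f*). In particular all iterates lie in a bounded set. -/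

import Mathlib

lemma grad_ineq_aux {E : Type*} [NormedAddCommGroup E] [InnerProductSpace ℝ E]
    (f : E → ℝ) (f' : E → E)
    (hconv : ConvexOn ℝ Set.univ f)
    (hderiv : ∀ y, HasFDerivAt f (innerSL ℝ (f' y)) y)
    (a b : E) : inner ℝ (f' a) (b - a) ≤ f b - f a := by
  set g : ℝ → ℝ := fun t => f (AffineMap.lineMap a b t) with hg
  have hgconv : ConvexOn ℝ Set.univ g := by
    have := hconv.comp_affineMap (AffineMap.lineMap a b)
    simp only [Set.preimage_univ] at this; exact this
  have hline : ∀ t : ℝ, HasDerivAt (fun s : ℝ => AffineMap.lineMap a b s) (b - a) t := by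
    intro t
    have : HasDerivAt (fun s : ℝ => a + s • (b - a)) ((1:ℝ) • (b - a)) t :=
      ((hasDerivAt_id t).smul_const (b - a)).const_add a
    exact this.congr_of_eventuallyEq (by filter_upwards with s; simp only [AffineMap.lineMap_apply_module]; module) |>.congr_deriv (one_smul ℝ (b-a))
  have hgd : HasDerivAt g (inner ℝ (f' a) (b - a)) 0 := by
    have h0 : (AffineMap.lineMap a b : ℝ → E) 0 = a := by simp
    have := (h0 ▸ hderiv a).comp_hasDerivAt 0 (hline 0)
    simp only [AffineMap.lineMap_apply_zero, innerSL_apply_apply] at this; exact this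
  have := hgconv.le_slope_of_hasDerivAt (Set.mem_univ (0:ℝ)) (Set.mem_univ (1:ℝ))
    zero_lt_one hgd
  simpa [slope_def_field, hg] using this

/-- **Lemma 3 of the paper.** For gradient descent with step sizes
`α_k ∈ [C₂, C₁]` satisfying the sufficient decrease condition, the iterates satisfy
`‖x_{k+1} − x̄‖² ≤ ‖x_0 − x̄‖² + (2C₁/γ)(f(x_0) − f(x_{k+1})) + 2C₂ ∑_{T=0}^k (f* − f(x_T))`
`≤ ‖x_0 − x̄‖² + (2C₁/γ)(f(x_0) − f*)` for every minimizer `x̄`; in particular all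
iterates lie in a bounded set. -/
theorem gradient_descent_line_search_bounded_iterates
    {E : Type*} [NormedAddCommGroup E] [InnerProductSpace ℝ E]
    (f : E → ℝ) (f' : E → E) (L : ℝ) (hL : 0 < L)
    (hconv : ConvexOn ℝ Set.univ f)
    (hderiv : ∀ y, HasFDerivAt f (innerSL ℝ (f' y)) y)
    (hlip : ∀ y z, ‖f' y - f' z‖ ≤ L * ‖y - z‖)
    (Ω : Set E) (hΩ : Ω = {z | ∀ y, f z ≤ f y}) (hΩne : Ω.Nonempty)
    (γ C₁ C₂ : ℝ) (hγ0 : 0 < γ) (hγ1 : γ ≤ 1)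
    (hC₂0 : 0 < C₂) (hC₂L : C₂ ≤ (2 - γ) / L) (hC₁ : C₂ ≤ C₁)
    (α : ℕ → ℝ) (hα : ∀ k, α k ∈ Set.Icc C₂ C₁)
    (x : ℕ → E) (hx : ∀ k, x (k + 1) = x k - α k • f' (x k))
    (hdec : ∀ k, f (x k - α k • f' (x k)) ≤
      f (x k) - γ * α k / 2 * ‖f' (x k)‖ ^ 2) :
    (∀ xbar ∈ Ω, ∀ k : ℕ,
      ‖x (k + 1) - xbar‖ ^ 2 ≤
          ‖x 0 - xbar‖ ^ 2 + (2 * C₁ / γ) * (f (x 0) - f (x (k + 1))) +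
            2 * C₂ * ∑ T ∈ Finset.range (k + 1), (f xbar - f (x T)) ∧
      ‖x 0 - xbar‖ ^ 2 + (2 * C₁ / γ) * (f (x 0) - f (x (k + 1))) +
            2 * C₂ * ∑ T ∈ Finset.range (k + 1), (f xbar - f (x T)) ≤
          ‖x 0 - xbar‖ ^ 2 + (2 * C₁ / γ) * (f (x 0) - f xbar)) ∧
    Bornology.IsBounded (Set.range x) := by
  have grad : ∀ a b : E, inner ℝ (f' a) (b - a) ≤ f b - f a :=
    grad_ineq_aux f f' hconv hderiv
  have hmin : ∀ xbar ∈ Ω, ∀ y, f xbar ≤ f y := by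
    intro xbar hxbar y
    rw [hΩ] at hxbar
    exact hxbar y
  have hC₁0 : 0 < C₁ := lt_of_lt_of_le hC₂0 hC₁
  -- one-step estimate
  have step : ∀ xbar ∈ Ω, ∀ k : ℕ,
      ‖x (k + 1) - xbar‖ ^ 2 ≤ ‖x k - xbar‖ ^ 2
        + (2 * C₁ / γ) * (f (x k) - f (x (k + 1)))
        + 2 * C₂ * (f xbar - f (x k)) := by
    intro xbar hxbar k
    obtain ⟨hcl, hcu⟩ := hα k
    have hc0 : 0 < α k := lt_of_lt_of_le hC₂0 hcl
    set c := α k with hc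
    set g := f' (x k) with hgdef
    set a := x k - xbar with ha
    have hx' : x (k + 1) = x k - c • g := hx k
    have expand : ‖x (k + 1) - xbar‖ ^ 2
        = ‖a‖ ^ 2 - 2 * (c * inner ℝ a g) + c ^ 2 * ‖g‖ ^ 2 := by
      have h1 : x (k + 1) - xbar = a - c • g := by rw [hx', ha]; abel
      rw [h1, norm_sub_sq_real, real_inner_smul_right, norm_smul]
      rw [mul_pow, Real.norm_eq_abs, sq_abs]
    have hdec' : f (x (k + 1)) ≤ f (x k) - γ * c / 2 * ‖g‖ ^ 2 := by
      rw [hx']; exact hdec k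
    have hN : (0:ℝ) ≤ ‖g‖ ^ 2 := sq_nonneg _
    have hdecr : 0 ≤ f (x k) - f (x (k + 1)) := by
      have hpos : 0 ≤ γ * c / 2 * ‖g‖ ^ 2 := by positivity
      linarith
    -- convexity bound
    have hgrad : inner ℝ (f' (x k)) (xbar - x k) ≤ f xbar - f (x k) := grad _ _
    have hIa : inner ℝ a g = -(inner ℝ (f' (x k)) (xbar - x k) : ℝ) := by
      rw [ha, real_inner_comm, ← inner_neg_right]
      congr 1; abel
    have hmin' : f xbar ≤ f (x k) := hmin xbar hxbar _
    have hmid : -(2 * (c * inner ℝ a g)) ≤ 2 * C₂ * (f xbar - f (x k)) := by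
      rw [hIa]
      nlinarith [mul_le_mul_of_nonneg_left hgrad (le_of_lt hc0)]
    have hlast : c ^ 2 * ‖g‖ ^ 2 ≤ (2 * C₁ / γ) * (f (x k) - f (x (k + 1))) := by
      have key : γ * c * ‖g‖ ^ 2 ≤ 2 * (f (x k) - f (x (k + 1))) := by nlinarith
      have h1 : γ * (c ^ 2 * ‖g‖ ^ 2) ≤ 2 * C₁ * (f (x k) - f (x (k + 1))) := by
        nlinarith [mul_le_mul_of_nonneg_left key (le_of_lt hc0),
          mul_le_mul_of_nonneg_right hcu (mul_nonneg (by norm_num : (0:ℝ) ≤ 2) hdecr)]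
      rw [div_mul_eq_mul_div, le_div_iff₀ hγ0]
      nlinarith
    linarith [expand.le, expand.ge]
  -- telescoped estimate (first inequality)
  have main : ∀ xbar ∈ Ω, ∀ k : ℕ,
      ‖x (k + 1) - xbar‖ ^ 2 ≤
        ‖x 0 - xbar‖ ^ 2 + (2 * C₁ / γ) * (f (x 0) - f (x (k + 1))) +
          2 * C₂ * ∑ T ∈ Finset.range (k + 1), (f xbar - f (x T)) := by
    intro xbar hxbar k
    induction k with
    | zero =>
      have := step xbar hxbar 0
      rw [Finset.sum_range_one]
      linarith
    | succ k ih =>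
      rw [Finset.sum_range_succ]
      have := step xbar hxbar (k + 1)
      nlinarith [this, ih]
  -- second inequality
  have second : ∀ xbar ∈ Ω, ∀ k : ℕ,
      ‖x 0 - xbar‖ ^ 2 + (2 * C₁ / γ) * (f (x 0) - f (x (k + 1))) +
          2 * C₂ * ∑ T ∈ Finset.range (k + 1), (f xbar - f (x T)) ≤
        ‖x 0 - xbar‖ ^ 2 + (2 * C₁ / γ) * (f (x 0) - f xbar) := by
    intro xbar hxbar k
    have hS : (∑ T ∈ Finset.range (k + 1), (f xbar - f (x T))) ≤ 0 :=
      Finset.sum_nonpos fun T _ => sub_nonpos.2 (hmin xbar hxbar _)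
    have hfr : 2 * C₁ / γ * (f (x 0) - f (x (k + 1))) ≤
        2 * C₁ / γ * (f (x 0) - f xbar) := by
      apply mul_le_mul_of_nonneg_left _ (by positivity)
      linarith [hmin xbar hxbar (x (k + 1))]
    nlinarith [mul_nonneg (mul_nonneg (by norm_num : (0:ℝ) ≤ 2) hC₂0.le) (neg_nonneg.2 hS)]
  refine ⟨fun xbar hxbar k => ⟨main xbar hxbar k, second xbar hxbar k⟩, ?_⟩
  -- boundedness
  obtain ⟨xbar, hxbar⟩ := hΩne
  set B : ℝ := ‖x 0 - xbar‖ ^ 2 + (2 * C₁ / γ) * (f (x 0) - f xbar) with hB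
  have hBub : ∀ n, ‖x n - xbar‖ ^ 2 ≤ B := by
    intro n
    cases n with
    | zero =>
      have : (0:ℝ) ≤ (2 * C₁ / γ) * (f (x 0) - f xbar) := by
        apply mul_nonneg (by positivity)
        linarith [hmin xbar hxbar (x 0)]
      rw [hB]; linarith
    | succ k =>
      exact le_trans (main xbar hxbar k) (second xbar hxbar k)
  apply Bornology.IsBounded.subset (Metric.isBounded_closedBall (x := xbar) (r := Real.sqrt B))
  rintro _ ⟨n, rfl⟩
  rw [Metric.mem_closedBall, dist_eq_norm]
  calc ‖x n - xbar‖ = Real.sqrt (‖x n - xbar‖ ^ 2) := by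
        rw [Real.sqrt_sq (norm_nonneg _)]
    _ ≤ Real.sqrt B := Real.sqrt_le_sqrt (hBub n)
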